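/- Let D be a positive non-square integer with D ≡ 0 or 1 (mod 4), d = D, and let s₁, s₂ be positive integers with gcd(d·s₁, s₂) = 1, the number Ω⁻(s₂) of prime divisors of s₂ (with multiplicity) having Kronecker symbol -1 odd, and s₂ < d·s₁. Then M = d·s₁ - s₂ has a prime divisor q with (D/q) = -1 and gcd(q, s₁·s₂) = 1. -/

import Mathlib

/-- Kronecker symbol `(D/q)` at a prime `q`, for discriminants `D ≡ 0,1 (mod 4)`. -/
def kron (D : ℤ) (q : ℕ) : ℤ :=
  if q = 2 then (if D % 8 = 1 then 1 else if D % 8 = 5 then -1 else 0)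
  else jacobiSym D q


/-- `Ω_D⁻(n)`: number of prime divisors of `n`, with multiplicity, lying in `P(D)`. -/
def OmegaMinus (D : ℤ) (n : ℕ) : ℕ :=
  ((n.primeFactorsList).filter (fun q => kron D q = -1)).length

private def Kfun (D : ℤ) (n : ℕ) : ℤ := ((n.primeFactorsList).map (kron D)).prod

private lemma Kfun_mul (D : ℤ) {m n : ℕ} (hm : m ≠ 0) (hn : n ≠ 0) :
    Kfun D (m * n) = Kfun D m * Kfun D n := by
  unfold Kfun
  rw [← List.prod_append, ← List.map_append]
  exact List.Perm.prod_eq (List.Perm.map _ (Nat.perm_primeFactorsList_mul hm hn))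

private lemma Kfun_prime (D : ℤ) {q : ℕ} (hq : q.Prime) : Kfun D q = kron D q := by
  simp [Kfun, Nat.primeFactorsList_prime hq]

/-- For odd `n`, `Kfun D n = J(D | n)`. -/
private lemma Kfun_odd (D : ℤ) : ∀ n : ℕ, Odd n → Kfun D n = jacobiSym D n := by
  intro n
  induction n using Nat.strong_induction_on with
  | _ n ih =>
    intro hn
    rcases eq_or_ne n 1 with rfl | hn1
    · simp [Kfun, Nat.primeFactorsList_one]
    have hn0 : n ≠ 0 := by rintro rfl; simp [Nat.odd_iff] at hn
    obtain ⟨q, hq, hqdvd⟩ : ∃ q : ℕ, q.Prime ∧ q ∣ n :=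
      ⟨n.minFac, Nat.minFac_prime hn1, n.minFac_dvd⟩
    obtain ⟨m, hm⟩ := hqdvd
    have hm0 : m ≠ 0 := by rintro rfl; simp at hm; exact hn0 hm
    have hmlt : m < n := by
      have : 1 < q := hq.one_lt
      calc m = n / q := by rw [hm]; exact (Nat.mul_div_cancel_left m (by omega)).symm
      _ < n := Nat.div_lt_self (by omega) this
    have hmodd : Odd m := by
      rcases Nat.even_or_odd m with he | ho
      · exfalso
        have : Even n := by rw [hm]; exact he.mul_left q
        exact (Nat.not_odd_iff_even.mpr this) hn
      · exact ho
    have hqodd : q ≠ 2 := by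
      rintro rfl
      have : Even n := by rw [hm]; exact even_two.mul_right m
      exact (Nat.not_odd_iff_even.mpr this) hn
    rw [hm, Kfun_mul D hq.ne_zero hm0, Kfun_prime D hq,
      jacobiSym.mul_right' D hq.ne_zero hm0, ih m hmlt hmodd]
    congr 1
    simp [kron, hqodd]

/-- For `D > 0`, `D ≡ 1 (mod 4)`: `Kfun D n = J(n | D.natAbs)`. -/
private lemma Kfun_oddD (D : ℤ) (hDpos : 0 < D) (hD1 : D % 4 = 1) :
    ∀ n : ℕ, n ≠ 0 → Kfun D n = jacobiSym (n : ℤ) D.natAbs := by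
  have hdD : (D.natAbs : ℤ) = D := Int.natAbs_of_nonneg hDpos.le
  set d := D.natAbs with hd
  have hd4 : d % 4 = 1 := by omega
  have hdodd : Odd d := by rw [Nat.odd_iff]; omega
  intro n
  induction n using Nat.strong_induction_on with
  | _ n ih =>
    intro hn0
    rcases eq_or_ne n 1 with rfl | hn1
    · simp [Kfun, Nat.primeFactorsList_one]
    obtain ⟨q, hq, hqdvd⟩ : ∃ q : ℕ, q.Prime ∧ q ∣ n :=
      ⟨n.minFac, Nat.minFac_prime hn1, n.minFac_dvd⟩
    obtain ⟨m, hm⟩ := hqdvd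
    have hm0 : m ≠ 0 := by rintro rfl; simp at hm; exact hn0 hm
    have hmlt : m < n := by
      have h1 : 1 < q := hq.one_lt
      have h2 : n ≠ 0 := hn0
      calc m = n / q := by rw [hm]; exact (Nat.mul_div_cancel_left m (by omega)).symm
      _ < n := Nat.div_lt_self (by omega) h1
    have hkq : kron D q = jacobiSym (q : ℤ) d := by
      by_cases h2 : q = 2
      · subst h2
        rw [show ((2:ℕ):ℤ) = (2:ℤ) from rfl, jacobiSym.at_two hdodd, ZMod.χ₈_nat_eq_if_mod_eight]
        have hd2 : ¬ d % 2 = 0 := by omega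
        rw [if_neg hd2]
        have h8 : D % 8 = 1 ∨ D % 8 = 5 := by omega
        rcases h8 with h8 | h8
        · have : d % 8 = 1 := by omega
          simp [kron, h8, this]
        · have hd8 : d % 8 = 5 := by omega
          have : D % 8 ≠ 1 := by omega
          simp [kron, h8, hd8, this]
      · have hqodd : Odd q := hq.odd_of_ne_two h2
        rw [show kron D q = jacobiSym D q by simp [kron, h2], ← hdD,
          jacobiSym.quadratic_reciprocity_one_mod_four hd4 hqodd]
    rw [hm, Kfun_mul D hq.ne_zero hm0, Kfun_prime D hq, hkq, ih m hmlt hm0]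
    rw [show ((q * m : ℕ) : ℤ) = (q : ℤ) * m by push_cast; ring, jacobiSym.mul_left]

private lemma map_prod_eq_pow (D : ℤ) (l : List ℕ)
    (h : ∀ q ∈ l, kron D q = 1 ∨ kron D q = -1) :
    (l.map (kron D)).prod = (-1 : ℤ) ^ (l.filter (fun q => kron D q = -1)).length := by
  induction l with
  | nil => simp
  | cons a t ih =>
    have ha := h a List.mem_cons_self
    have ht := ih fun q hq => h q (List.mem_cons_of_mem a hq)
    rw [List.map_cons, List.prod_cons, ht, List.filter_cons]
    by_cases hneg : kron D a = -1
    · simp [hneg, pow_succ, mul_comm]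
    · have h1 : kron D a = 1 := ha.resolve_right hneg
      simp [hneg, h1]

private lemma kron_pm {D : ℤ} (hD : D % 4 = 0 ∨ D % 4 = 1) {q : ℕ} (hq : q.Prime)
    (h : Nat.gcd D.natAbs q = 1) : kron D q = 1 ∨ kron D q = -1 := by
  by_cases h2 : q = 2
  · subst h2
    have hnd : ¬ (2 : ℤ) ∣ D := by
      intro hdvd
      have h2' : (2 : ℕ) ∣ D.natAbs := by
        rwa [← Int.natAbs_dvd_natAbs] at hdvd
      have := Nat.dvd_gcd h2' (dvd_refl 2)
      omega
    have h8 : D % 8 = 1 ∨ D % 8 = 5 := by omega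
    rcases h8 with h8 | h8
    · left; simp [kron, h8]
    · right
      have : D % 8 ≠ 1 := by omega
      simp [kron, h8, this]
  · rw [show kron D q = jacobiSym D q by simp [kron, h2]]
    refine jacobiSym.eq_one_or_neg_one ?_
    rwa [Int.gcd, Int.natAbs_natCast]

private lemma odd_sq_mod8 {s : ℕ} (h : s % 2 = 1) : ∃ j, s * s = 8 * j + 1 := by
  obtain ⟨k, hk⟩ : ∃ k, s = 2 * k + 1 := ⟨s / 2, by omega⟩
  rcases Nat.even_or_odd k with ⟨c, hc⟩ | ⟨c, hc⟩
  · exact ⟨2 * c * c + c, by subst hk; subst hc; ring⟩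
  · exact ⟨2 * c * c + 3 * c + 1, by subst hk; subst hc; ring⟩

theorem stmt4 (D : ℤ) (hDpos : 0 < D) (hD : D % 4 = 0 ∨ D % 4 = 1) (hns : ¬ IsSquare D)
    (d : ℕ) (hd : d = D.natAbs) (s₁ s₂ : ℕ) (hs₁ : 0 < s₁) (hs₂ : 0 < s₂)
    (hgcd : Nat.gcd (d * s₁) s₂ = 1) (hodd : Odd (OmegaMinus D s₂))
    (hlt : s₂ < d * s₁) :
    ∃ q : ℕ, q.Prime ∧ kron D q = -1 ∧ q ∣ (d * s₁ - s₂) ∧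
      Nat.gcd q (s₁ * s₂) = 1 := by
  have hdD : (d : ℤ) = D := by rw [hd]; exact Int.natAbs_of_nonneg hDpos.le
  set M := d * s₁ - s₂ with hMdef
  have hMadd : M + s₂ = d * s₁ := by omega
  have hdpos : 0 < d := by omega
  have hM0 : M ≠ 0 := by omega
  have hs₂0 : s₂ ≠ 0 := by omega
  -- coprimality facts
  have hgcdMs₂ : Nat.gcd M s₂ = 1 := by
    have h1 := Nat.gcd_add_self_left s₂ M
    rw [hMadd] at h1
    omega
  have hgcdMds₁ : Nat.gcd M (d * s₁) = 1 := by
    have h1 : Nat.gcd M (d * s₁) ∣ s₂ := by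
      have h2 : Nat.gcd M (d * s₁) ∣ d * s₁ - M := Nat.dvd_sub (Nat.gcd_dvd_right _ _) (Nat.gcd_dvd_left _ _)
      have h3 : d * s₁ - M = s₂ := by omega
      rwa [h3] at h2
    have h4 := Nat.dvd_gcd (Nat.gcd_dvd_right M (d * s₁)) h1
    rw [hgcd] at h4
    exact Nat.dvd_one.mp h4
  have hgcdMd : Nat.Coprime M d := Nat.Coprime.coprime_dvd_right (dvd_mul_right d s₁) hgcdMds₁
  have hgcdMs₁ : Nat.Coprime M s₁ := Nat.Coprime.coprime_dvd_right (dvd_mul_left s₁ d) hgcdMds₁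
  have hgcdds₂ : Nat.Coprime d s₂ := Nat.Coprime.coprime_dvd_left (dvd_mul_right d s₁) hgcd
  -- all prime factors of s₂ and of M have kron = ±1
  have hpmS : ∀ q ∈ s₂.primeFactorsList, kron D q = 1 ∨ kron D q = -1 := by
    intro q hq
    refine kron_pm hD (Nat.prime_of_mem_primeFactorsList hq) ?_
    rw [← hd]
    exact hgcdds₂.coprime_dvd_right (Nat.dvd_of_mem_primeFactorsList hq)
  have hpmM : ∀ q ∈ M.primeFactorsList, kron D q = 1 ∨ kron D q = -1 := by
    intro q hq
    refine kron_pm hD (Nat.prime_of_mem_primeFactorsList hq) ?_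
    rw [← hd]
    exact (hgcdMd.symm.coprime_dvd_right (Nat.dvd_of_mem_primeFactorsList hq))
  have hKs₂ : Kfun D s₂ = -1 := by
    rw [Kfun, map_prod_eq_pow D _ hpmS]
    exact Odd.neg_one_pow hodd
  -- key congruence: M * s₂ + s₂ * s₂ = d * (s₁ * s₂)
  have hts : M * s₂ + s₂ * s₂ = d * (s₁ * s₂) := by
    have : (M + s₂) * s₂ = d * s₁ * s₂ := by rw [hMadd]
    calc M * s₂ + s₂ * s₂ = (M + s₂) * s₂ := by ring
    _ = d * (s₁ * s₂) := by rw [hMadd]; ring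
  have hgs₂d : Nat.Coprime s₂ d := hgcdds₂.symm
  -- main computation: Kfun D M * Kfun D s₂ = 1
  have hprod : Kfun D M * Kfun D s₂ = 1 := by
    rcases hD with hD0 | hD1
    · -- D ≡ 0 (mod 4)
      have h4d : 4 ∣ d := by omega
      have h2ds₁ : 2 ∣ d * s₁ := Dvd.dvd.mul_right (by omega) s₁
      have hs₂odd : s₂ % 2 = 1 := by
        by_contra h
        have h2s₂ : 2 ∣ s₂ := by omega
        have := Nat.dvd_gcd h2ds₁ h2s₂
        omega
      have hModd : M % 2 = 1 := by omega
      rw [Kfun_odd D M (Nat.odd_iff.mpr hModd), Kfun_odd D s₂ (Nat.odd_iff.mpr hs₂odd),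
        ← jacobiSym.mul_right' D hM0 hs₂0]
      set t := M * s₂ with htdef
      have ht0 : t ≠ 0 := Nat.mul_ne_zero hM0 hs₂0
      have htodd : t % 2 = 1 := Nat.odd_iff.mp ((Nat.odd_iff.mpr hModd).mul (Nat.odd_iff.mpr hs₂odd))
      obtain ⟨j, hj⟩ := odd_sq_mod8 hs₂odd
      -- 2-adic decomposition of d
      set e := d.factorization 2 with hedef
      set u := d / 2 ^ e with hudef
      have hdu : 2 ^ e * u = d := Nat.ordProj_mul_ordCompl_eq_self d 2
      have hu2 : ¬ 2 ∣ u := Nat.not_dvd_ordCompl Nat.prime_two (by omega)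
      have huodd : u % 2 = 1 := by omega
      have hu0 : u ≠ 0 := by intro h0; rw [h0, mul_zero] at hdu; omega
      have hud : u ∣ d := ⟨2 ^ e, by rw [← hdu]; ring⟩
      have he2 : 2 ≤ e := by
        refine (Nat.Prime.pow_dvd_iff_le_factorization Nat.prime_two (by omega)).mp ?_
        simpa using h4d
      have hgs₂u : Nat.Coprime s₂ u := hgs₂d.coprime_dvd_right hud
      have hut4 : t % 4 = 3 := by
        have h4' : 4 ∣ d * (s₁ * s₂) := Dvd.dvd.mul_right h4d _
        omega
      -- J(u | t) = 1
      have hcast : (t : ℤ) + (s₂ : ℤ) * (s₂ : ℤ) = (d : ℤ) * ((s₁ : ℤ) * (s₂ : ℤ)) := by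
        exact_mod_cast hts
      have hJtu : jacobiSym (t : ℤ) u = ZMod.χ₄ u := by
        have hdvd : (u : ℤ) ∣ (-((s₂ : ℤ) ^ 2)) - (t : ℤ) := by
          have heq : (-((s₂ : ℤ) ^ 2)) - (t : ℤ) = -(((d : ℤ)) * ((s₁ : ℤ) * s₂)) := by
            rw [← hcast]; ring
          rw [heq]
          exact dvd_neg.mpr (Dvd.dvd.mul_right (Int.natCast_dvd_natCast.mpr hud) _)
        have hmod : (t : ℤ) % (u : ℤ) = (-((s₂ : ℤ) ^ 2)) % (u : ℤ) :=
          Int.modEq_iff_dvd.mpr hdvd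
        rw [jacobiSym.mod_left' hmod, jacobiSym.neg _ (Nat.odd_iff.mpr huodd),
          jacobiSym.sq_one' (by rwa [Int.gcd, Int.natAbs_natCast, Int.natAbs_natCast]), mul_one]
      have hJut : jacobiSym (u : ℤ) t = 1 := by
        have hqr := jacobiSym.quadratic_reciprocity_if huodd htodd
        rcases (by omega : u % 4 = 1 ∨ u % 4 = 3) with hu4 | hu4
        · rw [if_neg (by simp [hu4])] at hqr
          rw [← hqr, hJtu, ZMod.χ₄_nat_one_mod_four hu4]
        · rw [if_pos ⟨hu4, hut4⟩] at hqr
          rw [← hqr, hJtu, ZMod.χ₄_nat_three_mod_four hu4]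
          ring
      -- decompose D
      have hDcast : D = ((2 : ℤ)) ^ e * (u : ℤ) := by
        rw [← hdD, ← hdu]
        push_cast
        ring
      rw [hDcast, jacobiSym.mul_left, jacobiSym.pow_left,
        jacobiSym.at_two (Nat.odd_iff.mpr htodd), hJut, mul_one]
      by_cases h8 : 8 ∣ d
      · have ht8 : t % 8 = 7 := by
          have h8' : 8 ∣ d * (s₁ * s₂) := Dvd.dvd.mul_right h8 _
          omega
        rw [ZMod.χ₈_nat_eq_if_mod_eight]
        rw [if_neg (by omega), if_pos (by omega)]
        exact one_pow e
      · have he2' : e = 2 := by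
          by_contra hne
          have he3 : 3 ≤ e := by omega
          have : (2 : ℕ) ^ 3 ∣ 2 ^ e := pow_dvd_pow 2 he3
          have : (8 : ℕ) ∣ d := by
            refine dvd_trans (by norm_num : (8:ℕ) ∣ 2 ^ 3) (dvd_trans this ⟨u, hdu.symm⟩)
          exact h8 this
        rw [he2', ZMod.χ₈_nat_eq_if_mod_eight, if_neg (by omega)]
        split_ifs <;> ring
    · -- D ≡ 1 (mod 4)
      have hd4 : d % 4 = 1 := by omega
      have hdodd : Odd d := by rw [Nat.odd_iff]; omega
      rw [Kfun_oddD D hDpos hD1 M hM0, Kfun_oddD D hDpos hD1 s₂ hs₂0, ← hd,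
        ← jacobiSym.mul_left]
      have hcast : ((M : ℤ) * (s₂ : ℤ)) + (s₂ : ℤ) * (s₂ : ℤ)
          = (d : ℤ) * ((s₁ : ℤ) * (s₂ : ℤ)) := by
        exact_mod_cast hts
      have hdvd : (d : ℤ) ∣ (-((s₂ : ℤ) ^ 2)) - ((M : ℤ) * s₂) := by
        have heq : ((-((s₂ : ℤ) ^ 2)) - ((M : ℤ) * s₂)) = -(((d : ℤ)) * ((s₁ : ℤ) * s₂)) := by
          rw [← hcast]; ring
        rw [heq]
        exact dvd_neg.mpr (Dvd.dvd.mul_right (dvd_refl ((d : ℕ) : ℤ)) _)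
      have hmod : ((M : ℤ) * (s₂ : ℤ)) % (d : ℤ) = (-((s₂ : ℤ) ^ 2)) % (d : ℤ) :=
        Int.modEq_iff_dvd.mpr hdvd
      rw [jacobiSym.mod_left' hmod, jacobiSym.neg _ hdodd,
        jacobiSym.sq_one' (by rwa [Int.gcd, Int.natAbs_natCast, Int.natAbs_natCast]), mul_one,
        ZMod.χ₄_nat_one_mod_four hd4]
  have hKM : Kfun D M = -1 := by
    rw [hKs₂] at hprod
    linarith
  -- extract a prime factor of M with kron = -1
  have hpow : (-1 : ℤ) ^ (M.primeFactorsList.filter (fun q => kron D q = -1)).length = -1 := by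
    rw [← map_prod_eq_pow D _ hpmM]
    exact hKM
  have hlen : (M.primeFactorsList.filter (fun q => kron D q = -1)).length ≠ 0 := by
    intro h0
    rw [h0, pow_zero] at hpow
    norm_num at hpow
  obtain ⟨q, hqmem⟩ := List.exists_mem_of_length_pos (Nat.pos_of_ne_zero hlen)
  rw [List.mem_filter] at hqmem
  obtain ⟨hqM, hqk⟩ := hqmem
  have hqk' : kron D q = -1 := by simpa using hqk
  have hqprime : q.Prime := Nat.prime_of_mem_primeFactorsList hqM
  have hqdvd : q ∣ M := Nat.dvd_of_mem_primeFactorsList hqM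
  refine ⟨q, hqprime, hqk', hqdvd, ?_⟩
  have hcop : Nat.Coprime M (s₁ * s₂) := Nat.Coprime.mul_right hgcdMs₁ hgcdMs₂
  exact Nat.Coprime.coprime_dvd_left hqdvd hcop
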